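/- Let G = (V,E) be a finite graph, (Λ,Σ,μ) a probability space, and (Γ_a)_{a ∈ V} measurable subsets of Λ with Γ_a ∩ Γ_b = ∅ whenever (a,b) ∈ E. Then ∑_{a ∈ V} μ(Γ_a) ≤ α(G), the independence number of G. -/
import Mathlib


open MeasureTheory

/-- The independence number of a graph: the clique number of its complement. -/
noncomputable def indepNum {V : Type*} (G : SimpleGraph V) : ℕ := Gᶜ.cliqueNum

theorem sum_measure_le_indepNum {V : Type*} [Fintype V] (G : SimpleGraph V)
    {Λ : Type*} [MeasurableSpace Λ] (μ : Measure Λ) [IsProbabilityMeasure μ]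
    (Γ : V → Set Λ) (hΓ : ∀ a, MeasurableSet (Γ a))
    (hdisj : ∀ a b, G.Adj a b → Disjoint (Γ a) (Γ b)) :
    ∑ a : V, μ (Γ a) ≤ (indepNum G : ENNReal) := by
  classical
  have key : ∀ lam : Λ, ((Finset.univ.filter fun a => lam ∈ Γ a).card : ENNReal)
      ≤ (indepNum G : ENNReal) := by
    intro lam
    have hclique : Gᶜ.IsClique (Finset.univ.filter fun a => lam ∈ Γ a) := by
      intro a ha b hb hab
      simp only [Finset.coe_filter, Set.mem_setOf_eq] at ha hb
      refine ⟨hab, fun hadj => ?_⟩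
      exact Set.disjoint_left.mp (hdisj a b hadj) ha.2 hb.2
    exact_mod_cast hclique.card_le_cliqueNum
  calc ∑ a : V, μ (Γ a)
      = ∫⁻ lam, ∑ a : V, (Γ a).indicator 1 lam ∂μ := by
        rw [lintegral_finset_sum _ (fun a _ => (measurable_one.indicator (hΓ a)))]
        exact Finset.sum_congr rfl fun a _ => lintegral_indicator_one (hΓ a) |>.symm ▸ (lintegral_indicator_one (hΓ a))
    _ ≤ ∫⁻ _, (indepNum G : ENNReal) ∂μ := by
        refine lintegral_mono fun lam => ?_
        have : ∑ a : V, (Γ a).indicator 1 lam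
            = ((Finset.univ.filter fun a => lam ∈ Γ a).card : ENNReal) := by
          rw [Finset.card_filter]
          push_cast
          exact Finset.sum_congr rfl fun a _ => by simp [Set.indicator_apply]
        rw [this]; exact key lam
    _ = (indepNum G : ENNReal) := by simp
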